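/- If n is a positive multiple of 4 and t = π/4 + π·k/2 for an integer k ≥ 0, then |[exp(-ι·t·H(K_n^-))]_{1,n}| = 1; that is, K_n^- admits perfect state transfer between the two non-adjacent vertices 1 and n at time t. -/

import Mathlib

open NormedSpace in
lemma exp_smul_idem {N : Type*} [Fintype N] [DecidableEq N]
    (E : Matrix N N ℂ) (hE : E * E = E) (c : ℂ) :
    NormedSpace.exp (c • E) = 1 + (Complex.exp c - 1) • E := by
  have hEpow : ∀ m : ℕ, E ^ (m + 1) = E := by
    intro m; induction m with
    | zero => simp
    | succ m ih => rw [pow_succ, ih, hE]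
  rw [NormedSpace.exp_eq_tsum ℂ]
  have hterm : ∀ m : ℕ, ((m.factorial : ℂ)⁻¹) • (c • E) ^ m
      = (c ^ m / m.factorial) • E + (if m = 0 then (1 : Matrix N N ℂ) - E else 0) := by
    intro m
    cases m with
    | zero => simp
    | succ m => rw [smul_pow, hEpow, smul_smul, if_neg (Nat.succ_ne_zero m)]; rw [add_zero]; ring_nf
  have hs1 : Summable fun m : ℕ => (c ^ m / m.factorial) • E :=
    (NormedSpace.expSeries_div_summable c).smul_const E
  have hs2 : Summable fun m : ℕ => (if m = 0 then (1 : Matrix N N ℂ) - E else 0) := by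
    apply summable_of_ne_finset_zero (s := {0})
    intro m hm; simp at hm; simp [hm]
  calc (∑' m : ℕ, ((m.factorial : ℂ)⁻¹) • (c • E) ^ m)
      = ∑' m : ℕ, ((c ^ m / m.factorial) • E + (if m = 0 then (1 : Matrix N N ℂ) - E else 0)) := by
        exact tsum_congr hterm
    _ = (∑' m : ℕ, (c ^ m / m.factorial) • E) + ∑' m : ℕ, (if m = 0 then (1 : Matrix N N ℂ) - E else 0) :=
        Summable.tsum_add hs1 hs2
    _ = (Complex.exp c) • E + ((1 : Matrix N N ℂ) - E) := by
        rw [Summable.tsum_smul_const (NormedSpace.expSeries_div_summable c), tsum_ite_eq,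
          Complex.exp_eq_exp_ℂ, NormedSpace.exp_eq_tsum_div]
    _ = 1 + (Complex.exp c - 1) • E := by rw [sub_smul, one_smul]; abel


/-- If `n` is a positive multiple of 4 and `t = π/4 + πk/2` (integer
`k ≥ 0`), then `|[exp(-ιtH(K_n^-))]_{a,b}| = 1`: perfect state transfer between the two
non-adjacent vertices of the complete graph minus an edge. -/
theorem complete_minus_edge_pst (n : ℕ) (hn : 4 ≤ n) (hmod : n % 4 = 0)
    (k : ℕ) (t : ℝ) (ht : t = Real.pi / 4 + Real.pi * k / 2)
    (a b : Fin n) (ha : (a : ℕ) = 0) (hb : (b : ℕ) = n - 1)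
    (P : Matrix (Fin n) (Fin n) ℂ)
    (hP : P = Matrix.of fun i j =>
      if (i = a ∧ j = a) ∨ (i = b ∧ j = b) then 1
      else if (i = a ∧ j = b) ∨ (i = b ∧ j = a) then -1 else 0)
    (H : Matrix (Fin n) (Fin n) ℂ)
    (hH : H = (n * (n - 1) / 2 - 1 : ℂ) • (1 : Matrix (Fin n) (Fin n) ℂ)
        - 2 • ((n : ℂ) • (1 : Matrix (Fin n) (Fin n) ℂ)
            - (Matrix.of fun _ _ : Fin n => (1 : ℂ)) - P)) :
    ‖NormedSpace.exp ((-(Complex.I * t)) • H) a b‖ = 1 := by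
  have hab : a ≠ b := by
    intro h
    rw [h] at ha
    omega
  set J : Matrix (Fin n) (Fin n) ℂ := Matrix.of fun _ _ => (1 : ℂ) with hJ
  set u : Fin n → ℂ := fun i => if i = a then 1 else if i = b then -1 else 0 with hu
  have h1 : u a = 1 := by simp [hu]
  have h2 : u b = -1 := by simp [hu, Ne.symm hab]
  have h3 : ∀ i, i ≠ a → i ≠ b → u i = 0 := by intro i h h'; simp [hu, h, h']
  have hPu : P = Matrix.of fun i j => u i * u j := by
    rw [hP]
    ext i j
    simp only [Matrix.of_apply]
    by_cases hia : i = a <;> by_cases hib : i = b <;> by_cases hja : j = a <;>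
      by_cases hjb : j = b <;>
      simp [hia, hib, hja, hjb, h1, h2, h3, hab, Ne.symm hab]
  have husum : ∑ i : Fin n, u i = 0 := by
    have e : ∀ i : Fin n, u i = (if i = a then (1:ℂ) else 0) + (if i = b then (-1:ℂ) else 0) := by
      intro i
      by_cases hia : i = a <;> by_cases hib : i = b <;>
        simp [hia, hib, h1, h2, h3, hab, Ne.symm hab]
    rw [Finset.sum_congr rfl fun i _ => e i, Finset.sum_add_distrib]
    simp
  have husq : ∑ i : Fin n, u i * u i = 2 := by
    have e : ∀ i : Fin n, u i * u i
        = (if i = a then (1:ℂ) else 0) + (if i = b then (1:ℂ) else 0) := by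
      intro i
      by_cases hia : i = a <;> by_cases hib : i = b <;>
        simp [hia, hib, h1, h2, h3, hab, Ne.symm hab]
    rw [Finset.sum_congr rfl fun i _ => e i, Finset.sum_add_distrib]
    norm_num
  have hJJ : J * J = (n : ℂ) • J := by
    ext i j
    simp [hJ, Matrix.mul_apply]
  have hPP : P * P = (2 : ℂ) • P := by
    rw [hPu]
    ext i j
    simp only [Matrix.mul_apply, Matrix.of_apply, Matrix.smul_apply, smul_eq_mul]
    calc ∑ l : Fin n, u i * u l * (u l * u j) = (u i * u j) * ∑ l : Fin n, u l * u l := by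
          rw [Finset.mul_sum]; exact Finset.sum_congr rfl fun l _ => by ring
      _ = 2 * (u i * u j) := by rw [husq]; ring
  have hJP : J * P = 0 := by
    rw [hPu]
    ext i j
    simp only [Matrix.mul_apply, Matrix.of_apply, Matrix.zero_apply, hJ, one_mul]
    rw [← Finset.sum_mul, husum, zero_mul]
  have hPJ : P * J = 0 := by
    rw [hPu]
    ext i j
    simp only [Matrix.mul_apply, Matrix.of_apply, Matrix.zero_apply, hJ, mul_one]
    rw [← Finset.mul_sum, husum, mul_zero]
  have hn0 : (n : ℂ) ≠ 0 := Nat.cast_ne_zero.mpr (by omega)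
  set EJ : Matrix (Fin n) (Fin n) ℂ := (n : ℂ)⁻¹ • J with hEJdef
  set EP : Matrix (Fin n) (Fin n) ℂ := (2 : ℂ)⁻¹ • P with hEPdef
  have hEJ : EJ * EJ = EJ := by
    rw [hEJdef, Matrix.smul_mul, Matrix.mul_smul, hJJ, smul_smul, smul_smul]
    congr 1
    field_simp
  have hEP : EP * EP = EP := by
    rw [hEPdef, Matrix.smul_mul, Matrix.mul_smul, hPP, smul_smul, smul_smul]
    congr 1
    norm_num
  set w : ℂ := -(Complex.I * t) * 2 with hw
  set s₀ : ℂ := -(Complex.I * t) * ((n * (n - 1) / 2 - 1) - 2 * n) with hs₀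
  have hA : (-(Complex.I * (t : ℂ))) • H
      = s₀ • (1 : Matrix (Fin n) (Fin n) ℂ) + (w • J + w • P) := by
    rw [hH, (Nat.cast_smul_eq_nsmul ℂ 2 _).symm]
    ext i j
    simp only [Matrix.add_apply, Matrix.smul_apply, Matrix.sub_apply, Matrix.one_apply,
      Matrix.of_apply, hJ, smul_eq_mul, Nat.cast_ofNat, hw, hs₀]
    split_ifs <;> ring
  have hcomm1 : Commute (s₀ • (1 : Matrix (Fin n) (Fin n) ℂ)) (w • J + w • P) :=
    (Commute.one_left _).smul_left s₀
  have hcomm2 : Commute (w • J) (w • P) := by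
    show _ = _
    simp [Matrix.smul_mul, Matrix.mul_smul, hJP, hPJ]
  have hwJ : w • J = (w * n) • EJ := by
    rw [hEJdef, smul_smul]
    congr 1
    field_simp
  have hwP : w • P = (2 * w) • EP := by
    rw [hEPdef, smul_smul]
    congr 1
    ring_nf
  set α : ℂ := Complex.exp (w * n) - 1 with hα
  set β : ℂ := Complex.exp (2 * w) - 1 with hβ
  have hexp : NormedSpace.exp ((-(Complex.I * (t : ℂ))) • H)
      = Complex.exp s₀ • (1 + α • EJ + β • EP) := by
    rw [hA, Matrix.exp_add_of_commute _ _ hcomm1, Matrix.exp_add_of_commute _ _ hcomm2,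
      hwJ, hwP, exp_smul_idem _ (one_mul 1) s₀, exp_smul_idem _ hEJ (w * n),
      exp_smul_idem _ hEP (2 * w)]
    have h1 : (1 : Matrix (Fin n) (Fin n) ℂ) + (Complex.exp s₀ - 1) • 1
        = Complex.exp s₀ • (1 : Matrix (Fin n) (Fin n) ℂ) := by
      rw [sub_smul, one_smul]
      abel
    have hO : EJ * EP = 0 := by
      rw [hEJdef, hEPdef, Matrix.smul_mul, Matrix.mul_smul, hJP]
      simp
    have h2 : ((1 : Matrix (Fin n) (Fin n) ℂ) + α • EJ) * (1 + β • EP)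
        = 1 + α • EJ + β • EP := by
      rw [mul_add, mul_one, add_mul, one_mul, Matrix.smul_mul, Matrix.mul_smul, hO]
      simp [add_assoc]
    rw [h1, h2, Matrix.smul_mul, one_mul]
  have hα0 : α = 0 := by
    obtain ⟨m, hm⟩ : ∃ m, n = 4 * m := ⟨n / 4, by omega⟩
    have : w * n = (-(m + 2 * m * k) : ℤ) * (2 * Real.pi * Complex.I) := by
      rw [hw, ht, hm]
      push_cast
      ring
    rw [hα, this, Complex.exp_int_mul_two_pi_mul_I, sub_self]
  have hβ2 : β = -2 := by
    have : 2 * w = Real.pi * Complex.I + (-(k + 1) : ℤ) * (2 * Real.pi * Complex.I) := by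
      rw [hw, ht]
      push_cast
      ring
    rw [hβ, this, Complex.exp_add, Complex.exp_pi_mul_I, Complex.exp_int_mul_two_pi_mul_I]
    ring
  have hentry : NormedSpace.exp ((-(Complex.I * (t : ℂ))) • H) a b = Complex.exp s₀ := by
    rw [hexp, hα0, hβ2]
    simp only [Matrix.smul_apply, Matrix.add_apply, Matrix.one_apply_ne hab,
      Matrix.smul_apply, hEPdef, hPu, Matrix.of_apply, h1, h2, smul_eq_mul, zero_smul,
      Matrix.zero_apply]
    ring_nf
  rw [hentry, Complex.norm_exp]
  have : s₀.re = 0 := by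
    have hr : ((n : ℂ) * ((n : ℂ) - 1) / 2 - 1 - 2 * n)
        = (((n : ℝ) * ((n : ℝ) - 1) / 2 - 1 - 2 * n : ℝ) : ℂ) := by
      push_cast
      ring
    rw [hs₀, hr]
    simp [Complex.mul_re]
  rw [this, Real.exp_zero]
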